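/- Let ω(t) = t and let f be a harmonic Bloch mapping on the unit disk, i.e., a complex-valued harmonic function with semi-norm ‖f‖_s = sup_{z∈𝔻}(1-|z|²)Λ_f(z) < ∞, where Λ_f(z) = |f_z(z)| + |f_{z̄}(z)|. Define B_f(z) = (1-|z|²)Λ_f(z). Then for all z₁, z₂ ∈ 𝔻, |B_f(z₁) - B_f(z₂)| ≤ (3√3/2)·‖f‖_s·ρ(z₁,z₂), where ρ(z₁,z₂) = |(z₁-z₂)/(1-z̄₂z₁)| is the pseudo-hyperbolic metric. -/

import Mathlib

open Metric Set Complex ComplexConjugate Filter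
open scoped Topology

set_option maxHeartbeats 1000000

namespace Stmt8


lemma normSq_moebM (M : ℝ) (a ζ : ℂ) :
    Complex.normSq (((M^2:ℝ):ℂ) - conj a * ζ) - M^2 * Complex.normSq (ζ - a)
      = (M^2 - Complex.normSq a) * (M^2 - Complex.normSq ζ) := by
  simp only [Complex.normSq_apply, Complex.sub_re, Complex.sub_im, Complex.mul_re,
    Complex.mul_im, Complex.conj_re, Complex.conj_im, Complex.ofReal_re, Complex.ofReal_im]
  ring

lemma moebM_den_ne {M : ℝ} (hM : 0 < M) {a ζ : ℂ} (ha : ‖a‖ < M)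
    (hζ : ‖ζ‖ < M) : ((M^2:ℝ):ℂ) - conj a * ζ ≠ 0 := by
  intro h
  have h2 : ‖conj a * ζ‖ < M^2 := by
    rw [norm_mul, Complex.norm_conj]
    nlinarith [norm_nonneg a, norm_nonneg ζ]
  have h3 : conj a * ζ = ((M^2:ℝ):ℂ) := by linear_combination -h
  rw [h3, Complex.norm_real, Real.norm_eq_abs, _root_.abs_of_nonneg (by positivity : (0:ℝ) ≤ M^2)] at h2
  linarith

lemma mapsTo_moebM {M : ℝ} (hM : 0 < M) {a ζ : ℂ} (ha : ‖a‖ < M)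
    (hζ : ‖ζ‖ < M) :
    ‖((M^2:ℝ):ℂ) * (ζ - a) / (((M^2:ℝ):ℂ) - conj a * ζ)‖ < M := by
  have hden := moebM_den_ne hM ha hζ
  have hdpos : 0 < ‖((M^2:ℝ):ℂ) - conj a * ζ‖ := by
    simpa [norm_pos_iff] using hden
  rw [norm_div, div_lt_iff₀ hdpos]
  have hkey := normSq_moebM M a ζ
  have h1 : Complex.normSq a < M^2 := by nlinarith [Complex.sq_norm a, norm_nonneg a]
  have h2 : Complex.normSq ζ < M^2 := by nlinarith [Complex.sq_norm ζ, norm_nonneg ζ]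
  have hpos : 0 < (M^2 - Complex.normSq a) * (M^2 - Complex.normSq ζ) :=
    mul_pos (by linarith) (by linarith)
  have hsq : (‖((M^2:ℝ):ℂ) * (ζ - a)‖)^2 < (M * ‖((M^2:ℝ):ℂ) - conj a * ζ‖)^2 := by
    rw [norm_mul, mul_pow, mul_pow, Complex.sq_norm, Complex.sq_norm, Complex.sq_norm,
      Complex.normSq_ofReal]
    nlinarith [Complex.normSq_nonneg (ζ - a), mul_pos (mul_pos hM hM) hpos]
  exact lt_of_pow_lt_pow_left₀ 2 (by positivity) hsq

lemma final_arith {cK M s dd : ℝ} (hcK : 0 < cK) (hMpos : 0 < M) (hMcK : M ≤ cK)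
    (hs : 0 ≤ s) (hsM : s < M^2) (e1 : M^2*dd ≤ cK*(M^2 - s)) (hdd : 0 ≤ dd) :
    dd ≤ cK - s/cK := by
  have hdK : dd ≤ cK := by nlinarith
  have hcontact : 0 ≤ cK - dd := by linarith
  suffices hsf : s / cK ≤ cK - dd by linarith
  rw [div_le_iff₀ hcK]
  have e2 : cK * s ≤ M^2 * (cK - dd) := by nlinarith
  have h4 : (cK - M) * (cK + M) * (cK - dd) ≥ 0 :=
    mul_nonneg (mul_nonneg (by linarith) (by linarith)) hcontact
  nlinarith

/-- Schwarz–Pick type estimate at the origin for the weighted class. -/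
lemma schwarzPick0 {D : ℂ → ℂ} {K : ℝ} (hK : 0 < K)
    (hD : DifferentiableOn ℂ D (ball 0 1))
    (hb : ∀ w ∈ ball (0:ℂ) 1, (1 - ‖w‖ ^ 2) * ‖D w‖ ≤ K) :
    ‖deriv D 0‖ ≤ 3*Real.sqrt 3/2*K - ‖D 0‖^2 / (3*Real.sqrt 3/2*K) := by
  have s3sq : Real.sqrt 3 ^ 2 = 3 := Real.sq_sqrt (by norm_num)
  have s3pos : 0 < Real.sqrt 3 := Real.sqrt_pos.2 (by norm_num)
  have s3ge1 : 1 ≤ Real.sqrt 3 := by nlinarith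
  set r : ℝ := (Real.sqrt 3)⁻¹ with hr
  have hrpos : 0 < r := by positivity
  have hr1 : r < 1 := by
    rw [hr, inv_lt_one_iff₀]; right; nlinarith
  have hrsq : r^2 = 1/3 := by rw [hr, inv_pow, s3sq]; norm_num
  set M : ℝ := 3*K/2 with hM
  have hMpos : 0 < M := by positivity
  set cK : ℝ := 3*Real.sqrt 3/2*K with hcK
  have hcKpos : 0 < cK := by positivity
  have hMcK : M ≤ cK := by rw [hM, hcK]; nlinarith
  have h33 : Real.sqrt 3 * (Real.sqrt 3)⁻¹ = 1 := mul_inv_cancel₀ (ne_of_gt s3pos)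
  have hMr : M / r = cK := by
    rw [div_eq_iff (ne_of_gt hrpos), hcK, hr, hM]
    linear_combination (-(3*K)/2) * h33
  have hsub : ball (0:ℂ) r ⊆ ball (0:ℂ) 1 := ball_subset_ball (le_of_lt hr1)
  have habsD : ∀ w ∈ ball (0:ℂ) r, ‖D w‖ < M := by
    intro w hw
    have hb1 := hb w (hsub hw)
    have hwr : ‖w‖ < r := by simpa [mem_ball, Complex.dist_eq] using hw
    have h23 : (2:ℝ)/3 < 1 - ‖w‖ ^ 2 := by nlinarith [norm_nonneg w]
    nlinarith [norm_nonneg (D w)]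
  have h0r : (0:ℂ) ∈ ball (0:ℂ) r := by simp [hrpos]
  have haK : ‖D 0‖ ≤ K := by
    have := hb 0 (by simp); simpa using this
  have haM : ‖D 0‖ < M := lt_of_le_of_lt haK (by rw [hM]; linarith)
  set a : ℂ := D 0 with haa
  set F : ℂ → ℂ := fun w => ((M^2:ℝ):ℂ) * (D w - a) / (((M^2:ℝ):ℂ) - conj a * D w) with hF
  have hdenne : ∀ w ∈ ball (0:ℂ) r, ((M^2:ℝ):ℂ) - conj a * D w ≠ 0 :=
    fun w hw => moebM_den_ne hMpos haM (habsD w hw)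
  have hFd : DifferentiableOn ℂ F (ball 0 r) := by
    apply DifferentiableOn.div
    · exact ((hD.mono hsub).sub (differentiableOn_const _)).const_mul _
    · exact (differentiableOn_const _).sub ((hD.mono hsub).const_mul _)
    · exact hdenne
  have hF0 : F 0 = 0 := by simp [hF, ← haa]
  have hmaps : MapsTo F (ball (0:ℂ) r) (ball (F 0) M) := by
    intro w hw
    rw [hF0, mem_ball, dist_zero_right]
    exact mapsTo_moebM hMpos haM (habsD w hw)
  have hSch : ‖deriv F 0‖ ≤ M / r :=
    Complex.norm_deriv_le_div_of_mapsTo_ball hFd (hmaps.mono_right ball_subset_closedBall) hrpos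
  rw [hMr] at hSch
  -- compute deriv F 0
  have hD0 : HasDerivAt D (deriv D 0) 0 :=
    (hD.differentiableAt (isOpen_ball.mem_nhds (by simp))).hasDerivAt
  set d : ℂ := deriv D 0 with hd
  have hnum : HasDerivAt (fun w => ((M^2:ℝ):ℂ) * (D w - a)) (((M^2:ℝ):ℂ) * d) 0 :=
    (hD0.sub_const a).const_mul _
  have hden0 : HasDerivAt (fun w => ((M^2:ℝ):ℂ) - conj a * D w) (-(conj a * d)) 0 :=
    (hD0.const_mul (conj a)).const_sub (((M^2:ℝ):ℂ))
  have hFder := hnum.div hden0 (hdenne 0 h0r)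
  have hderivF : deriv F 0 = ((M^2:ℝ):ℂ) * d / (((M^2:ℝ):ℂ) - ((Complex.normSq a:ℝ):ℂ)) := by
    rw [show deriv F 0 = _ from hFder.deriv, ← haa]
    have h0 : D 0 - a = 0 := by rw [haa, sub_self]
    rw [h0]
    have hca : conj a * D 0 = ((Complex.normSq a:ℝ):ℂ) := by
      rw [← haa, mul_comm, Complex.mul_conj]
    rw [hca]
    set t : ℂ := ((M^2:ℝ):ℂ) - ((Complex.normSq a:ℝ):ℂ) with ht
    have htne : t ≠ 0 := by
      have := hdenne 0 h0r
      rw [← haa] at this; rwa [hca] at this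
    field_simp
    ring
  have hnsa : Complex.normSq a < M^2 := by
    nlinarith [Complex.sq_norm a, norm_nonneg a]
  have habsF : ‖deriv F 0‖ = M^2 * ‖d‖ / (M^2 - Complex.normSq a) := by
    rw [hderivF, norm_div, norm_mul, Complex.norm_real, Real.norm_eq_abs, _root_.abs_of_nonneg (by positivity : (0:ℝ) ≤ M^2)]
    have : ((M^2:ℝ):ℂ) - ((Complex.normSq a:ℝ):ℂ) = (((M^2 - Complex.normSq a :ℝ)):ℂ) := by
      push_cast; ring
    rw [this, Complex.norm_real, Real.norm_eq_abs, _root_.abs_of_nonneg (by linarith)]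
  rw [habsF] at hSch
  -- final arithmetic
  have hMs : 0 < M^2 - Complex.normSq a := by linarith
  have e1 : M^2 * ‖d‖ ≤ cK * (M^2 - Complex.normSq a) := by
    rw [div_le_iff₀ hMs] at hSch; linarith
  have hs : ‖D 0‖^2 = Complex.normSq a := by rw [haa]; exact Complex.sq_norm _
  rw [hs]
  exact final_arith hcKpos hMpos hMcK (Complex.normSq_nonneg a) hnsa e1 (norm_nonneg d)



lemma abs_lt_one_of_normSq {x : ℂ} (h : Complex.normSq x < 1) : ‖x‖ < 1 := by
  nlinarith [Complex.sq_norm x, norm_nonneg x]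

lemma normSq_lt_one {x : ℂ} (h : ‖x‖ < 1) : Complex.normSq x < 1 := by
  nlinarith [Complex.sq_norm x, norm_nonneg x]

lemma mem_ball_iff_abs {x : ℂ} : x ∈ ball (0:ℂ) 1 ↔ ‖x‖ < 1 := by
  simp [mem_ball, Complex.dist_eq]

lemma normSq_moeb (z w : ℂ) :
    Complex.normSq (1 + conj z * w) - Complex.normSq (z + w)
      = (1 - Complex.normSq z) * (1 - Complex.normSq w) := by
  simp only [Complex.normSq_apply, Complex.add_re, Complex.add_im, Complex.mul_re,
    Complex.mul_im, Complex.conj_re, Complex.conj_im, Complex.one_re, Complex.one_im]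
  ring

lemma moeb_den_ne {z w : ℂ} (hz : ‖z‖ < 1) (hw : ‖w‖ < 1) :
    1 + conj z * w ≠ 0 := by
  intro h
  have h1 : ‖conj z * w‖ < 1 := by
    rw [norm_mul, Complex.norm_conj]
    nlinarith [norm_nonneg z, norm_nonneg w]
  have h2 : conj z * w = -1 := by linear_combination h
  rw [h2] at h1
  simp at h1

/-- the Möbius map `w ↦ (z+w)/(1+conj z w)` -/
noncomputable def moeb (z w : ℂ) : ℂ := (z + w) / (1 + conj z * w)

lemma one_sub_normSq_moeb {z w : ℂ} (hz : ‖z‖ < 1) (hw : ‖w‖ < 1) :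
    1 - Complex.normSq (moeb z w)
      = (1 - Complex.normSq z) * (1 - Complex.normSq w) / Complex.normSq (1 + conj z * w) := by
  have hd := moeb_den_ne hz hw
  have hd' : Complex.normSq (1 + conj z * w) ≠ 0 := by
    simpa [Complex.normSq_eq_zero] using hd
  rw [moeb, Complex.normSq_div]
  rw [eq_div_iff hd', sub_mul, div_mul_cancel₀ _ hd']
  linear_combination normSq_moeb z w

lemma moeb_mem_ball {z w : ℂ} (hz : ‖z‖ < 1) (hw : ‖w‖ < 1) :
    moeb z w ∈ ball (0:ℂ) 1 := by
  rw [mem_ball_iff_abs]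
  apply abs_lt_one_of_normSq
  have h1 := one_sub_normSq_moeb hz hw
  have hd : Complex.normSq (1 + conj z * w) ≠ 0 := by
    simpa [Complex.normSq_eq_zero] using moeb_den_ne hz hw
  have hp : 0 < (1 - Complex.normSq z) * (1 - Complex.normSq w) :=
    mul_pos (by linarith [normSq_lt_one hz]) (by linarith [normSq_lt_one hw])
  have : 0 < (1 - Complex.normSq z) * (1 - Complex.normSq w) / Complex.normSq (1 + conj z * w) := by
    apply div_pos hp
    cases' (Complex.normSq_nonneg (1 + conj z * w)).lt_or_eq with h h
    · exact h
    · exact absurd h.symm hd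
  linarith

/-- The Möbius-invariant second order bound at a general point. -/
lemma invariantBound {C : ℂ → ℂ} {K : ℝ} (hK : 0 < K)
    (hC : DifferentiableOn ℂ C (ball 0 1))
    (hb : ∀ w ∈ ball (0:ℂ) 1, (1 - ‖w‖ ^ 2) * ‖C w‖ ≤ K)
    {z : ℂ} (hz : z ∈ ball (0:ℂ) 1) :
    ‖(((1 - Complex.normSq z : ℝ)):ℂ)^2 * deriv C z
        - 2 * conj z * (((1 - Complex.normSq z : ℝ)):ℂ) * C z‖
      ≤ 3*Real.sqrt 3/2*K - ((1 - Complex.normSq z) * ‖C z‖)^2 / (3*Real.sqrt 3/2*K) := by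
  rw [mem_ball_iff_abs] at hz
  have hnz1 : Complex.normSq z < 1 := normSq_lt_one hz
  set n : ℝ := 1 - Complex.normSq z with hn
  have hnpos : 0 < n := by rw [hn]; linarith
  set D : ℂ → ℂ := fun w => C (moeb z w) * ((n:ℂ) / (1 + conj z * w)^2) with hD
  have hden : ∀ w ∈ ball (0:ℂ) 1, 1 + conj z * w ≠ 0 := by
    intro w hw; exact moeb_den_ne hz (mem_ball_iff_abs.1 hw)
  have hmemmo : ∀ w ∈ ball (0:ℂ) 1, moeb z w ∈ ball (0:ℂ) 1 := by
    intro w hw; exact moeb_mem_ball hz (mem_ball_iff_abs.1 hw)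
  have hmoD : DifferentiableOn ℂ (moeb z) (ball 0 1) := by
    apply DifferentiableOn.div
    · exact (differentiableOn_const _).add differentiableOn_id
    · exact (differentiableOn_const _).add ((differentiableOn_id).const_mul _)
    · exact hden
  have hDdiff : DifferentiableOn ℂ D (ball 0 1) := by
    apply DifferentiableOn.mul
    · exact hC.comp hmoD fun w hw => hmemmo w hw
    · apply DifferentiableOn.div (differentiableOn_const _)
      · exact (((differentiableOn_const _).add ((differentiableOn_id).const_mul _)).pow 2)
      · intro w hw; exact pow_ne_zero 2 (hden w hw)
  -- the transfer bound
  have hbD : ∀ w ∈ ball (0:ℂ) 1, (1 - ‖w‖ ^ 2) * ‖D w‖ ≤ K := by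
    intro w hw
    have hw1 : ‖w‖ < 1 := mem_ball_iff_abs.1 hw
    have hdw := hden w hw
    have hnsd : Complex.normSq (1 + conj z * w) ≠ 0 := by
      simpa [Complex.normSq_eq_zero] using hdw
    have hnsdpos : 0 < Complex.normSq (1 + conj z * w) :=
      (Complex.normSq_nonneg _).lt_of_ne (Ne.symm hnsd)
    have habsD : ‖D w‖ = ‖C (moeb z w)‖ * (n / Complex.normSq (1 + conj z * w)) := by
      rw [hD]
      simp only [norm_mul, norm_div, Complex.norm_real, Real.norm_eq_abs, norm_pow]
      rw [_root_.abs_of_nonneg (le_of_lt hnpos), ← Complex.sq_norm]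
    have key : (1 - ‖w‖ ^ 2) * (n / Complex.normSq (1 + conj z * w))
        = 1 - Complex.normSq (moeb z w) := by
      rw [one_sub_normSq_moeb hz hw1, Complex.sq_norm, hn]
      field_simp
    calc (1 - ‖w‖ ^ 2) * ‖D w‖
        = ((1 - ‖w‖ ^ 2) * (n / Complex.normSq (1 + conj z * w)))
            * ‖C (moeb z w)‖ := by rw [habsD]; ring
      _ = (1 - Complex.normSq (moeb z w)) * ‖C (moeb z w)‖ := by rw [key]
      _ ≤ K := by
          have := hb (moeb z w) (hmemmo w hw)
          rwa [Complex.sq_norm] at this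
  -- apply schwarzPick0
  have h0 : (0:ℂ) ∈ ball (0:ℂ) 1 := by simp
  have hSP := schwarzPick0 hK hDdiff hbD
  -- compute D 0 and deriv D 0
  have hmo0 : moeb z 0 = z := by simp [moeb]
  have hD0 : D 0 = C z * (n:ℂ) := by simp [hD, hmo0]
  -- derivative computation
  have hCz : HasDerivAt C (deriv C z) z := by
    apply (hC.differentiableAt _).hasDerivAt
    exact isOpen_ball.mem_nhds (mem_ball_iff_abs.2 hz)
  have hmo' : HasDerivAt (moeb z) ((n:ℂ)) 0 := by
    have h1 : HasDerivAt (fun w => z + w) 1 0 := (hasDerivAt_id 0).const_add z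
    have h2 : HasDerivAt (fun w => 1 + conj z * w) (conj z) 0 := by
      simpa using ((hasDerivAt_id 0).const_mul (conj z)).const_add 1
    have hd0 : (1:ℂ) + conj z * 0 ≠ 0 := by simpa using hden 0 h0
    have hdd := h1.div h2 hd0
    have heq : (1 * (1 + conj z * 0) - (z + 0) * conj z) / (1 + conj z * 0)^2 = ((n:ℂ)) := by
      rw [hn]
      push_cast
      simp only [one_mul, mul_zero, add_zero, Complex.mul_conj]
      norm_num
    rw [heq] at hdd
    exact hdd
  have hcomp : HasDerivAt (fun w => C (moeb z w)) (deriv C z * (n:ℂ)) 0 := by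
    have hCz' : HasDerivAt C (deriv C z) (moeb z 0) := by rwa [hmo0]
    exact hCz'.comp 0 hmo'
  have hψ : HasDerivAt (fun w => (n:ℂ) / (1 + conj z * w)^2) (-2 * conj z * (n:ℂ)) 0 := by
    have h2 : HasDerivAt (fun w => 1 + conj z * w) (conj z) 0 := by
      simpa using ((hasDerivAt_id (0:ℂ)).const_mul (conj z)).const_add 1
    have hpow : HasDerivAt (fun w => (1 + conj z * w)^2) (2 * (1 + conj z * 0) ^ 1 * conj z) 0 := h2.pow 2
    have hd0 : ((1:ℂ) + conj z * 0)^2 ≠ 0 := pow_ne_zero _ (by simpa using hden 0 h0)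
    have hdd := (hasDerivAt_const (0:ℂ) ((n:ℂ))).div hpow hd0
    have heq : ((0:ℂ) * (1 + conj z * 0)^2 - (n:ℂ) * (2 * (1 + conj z * 0) ^ 1 * conj z)) / ((1 + conj z * 0)^2)^2
        = -2 * conj z * (n:ℂ) := by
      simp
      ring
    rw [heq] at hdd
    exact hdd
  have hDder : HasDerivAt D (deriv C z * (n:ℂ) * ((n:ℂ) / (1 + conj z * 0)^2) + C (moeb z 0) * (-2 * conj z * (n:ℂ))) 0 :=
    hcomp.mul hψ
  have hderD : deriv D 0 = ((n:ℝ):ℂ)^2 * deriv C z - 2 * conj z * ((n:ℝ):ℂ) * C z := by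
    rw [hDder.deriv, hmo0]
    simp
    ring
  -- assemble
  have habsD0 : ‖D 0‖ = (1 - Complex.normSq z) * ‖C z‖ := by
    rw [hD0, norm_mul, Complex.norm_real, Real.norm_eq_abs, _root_.abs_of_nonneg (le_of_lt hnpos), hn]
    ring
  rw [hderD, habsD0] at hSP
  exact hSP



/-- One-sided derivative of `t ↦ |q t|` with a value-aligned unimodular phase. -/
lemma absDini {q : ℝ → ℂ} {q' : ℂ} {x : ℝ} (h : HasDerivAt q q' x) :
    ∃ ν : ℂ, ‖ν‖ = 1 ∧ ν * (‖q x‖ : ℂ) = q x ∧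
      HasDerivWithinAt (fun t => ‖q t‖) ((conj ν * q').re) (Set.Ioi x) x := by
  by_cases hq : q x = 0
  · -- zero case
    set ν : ℂ := if q' = 0 then 1 else q' / (‖q'‖ : ℂ) with hν
    have hν1 : ‖ν‖ = 1 := by
      rw [hν]
      split_ifs with h0
      · simp
      · rw [norm_div, Complex.norm_real, Real.norm_eq_abs, _root_.abs_of_nonneg (norm_nonneg q')]
        exact div_self (by simpa [norm_eq_zero] using h0)
    have hval : (conj ν * q').re = ‖q'‖ := by
      rw [hν]
      split_ifs with h0
      · simp [h0]
      · have hq'0 : (‖q'‖ : ℝ) ≠ 0 := by simpa [norm_eq_zero] using h0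
        rw [map_div₀, Complex.conj_ofReal, div_mul_eq_mul_div, mul_comm, Complex.mul_conj,
          Complex.div_ofReal_re, Complex.ofReal_re, Complex.normSq_eq_norm_sq, sq, mul_div_assoc,
          div_self hq'0, mul_one]
    refine ⟨ν, hν1, by simp [hq], ?_⟩
    rw [hasDerivWithinAt_iff_tendsto_slope' (by simp : x ∉ Set.Ioi x), hval]
    have h1 : Tendsto (slope q x) (𝓝[>] x) (𝓝 q') :=
      (hasDerivAt_iff_tendsto_slope.1 h).mono_left
        (nhdsWithin_mono x fun z hz => ne_of_gt hz)
    have h2 : Tendsto (fun z => ‖slope q x z‖) (𝓝[>] x) (𝓝 (‖q'‖)) :=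
      continuous_norm.continuousAt.tendsto.comp h1
    apply h2.congr'
    filter_upwards [self_mem_nhdsWithin] with z hz
    have hzx : (0:ℝ) < z - x := sub_pos.2 hz
    have e1 : slope q x z = ((z - x)⁻¹ : ℝ) • (q z) := by
      rw [slope, hq, vsub_eq_sub, sub_zero]
    have e2 : slope (fun t => ‖q t‖) x z = (z - x)⁻¹ * ‖q z‖ := by
      rw [slope_def_field, hq, norm_zero, sub_zero, div_eq_inv_mul]
    rw [e1, e2, Complex.real_smul, norm_mul, Complex.norm_real, Real.norm_eq_abs,
      _root_.abs_of_pos (inv_pos.2 hzx)]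
  · -- nonzero case
    have habs : ‖q x‖ ≠ 0 := by simpa [norm_eq_zero] using hq
    set ν : ℂ := q x / (‖q x‖ : ℂ) with hν
    have hν1 : ‖ν‖ = 1 := by
      rw [hν, norm_div, Complex.norm_real, Real.norm_eq_abs, _root_.abs_of_nonneg (norm_nonneg _)]
      exact div_self habs
    have hν2 : ν * (‖q x‖ : ℂ) = q x := by
      rw [hν, div_mul_cancel₀]
      exact_mod_cast habs
    refine ⟨ν, hν1, hν2, ?_⟩
    -- |q t| = sqrt (re² + im²)
    have hre : HasDerivAt (fun t => (q t).re) q'.re x :=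
      Complex.reCLM.hasFDerivAt.comp_hasDerivAt x h
    have him : HasDerivAt (fun t => (q t).im) q'.im x :=
      Complex.imCLM.hasFDerivAt.comp_hasDerivAt x h
    have hnsq : HasDerivAt (fun t => (q t).re * (q t).re + (q t).im * (q t).im)
        (q'.re * (q x).re + (q x).re * q'.re + (q'.im * (q x).im + (q x).im * q'.im)) x :=
      (hre.mul hre).add (him.mul him)
    have hns0 : (q x).re * (q x).re + (q x).im * (q x).im ≠ 0 := by
      intro hc
      apply hq
      have h1 : Complex.normSq (q x) = 0 := by rw [Complex.normSq_apply]; linarith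
      exact Complex.normSq_eq_zero.1 h1
    have hsq := (Real.hasDerivAt_sqrt hns0).comp x hnsq
    have hfun : (fun t => Real.sqrt ((q t).re * (q t).re + (q t).im * (q t).im))
        = fun t => ‖q t‖ := by
      funext t
      rw [Complex.norm_def, Complex.normSq_apply]
    have hval : 1 / (2 * Real.sqrt ((q x).re * (q x).re + (q x).im * (q x).im))
          * (q'.re * (q x).re + (q x).re * q'.re + (q'.im * (q x).im + (q x).im * q'.im))
        = (conj ν * q').re := by
      have hsqv : Real.sqrt ((q x).re * (q x).re + (q x).im * (q x).im) = ‖q x‖ := by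
        rw [Complex.norm_def, Complex.normSq_apply]
      have hR : (conj ν * q').re = ((conj (q x) * q').re) / ‖q x‖ := by
        rw [hν, map_div₀, Complex.conj_ofReal, div_mul_eq_mul_div, Complex.div_ofReal_re]
      rw [hsqv, hR, Complex.mul_re, Complex.conj_re, Complex.conj_im]
      field_simp
      ring
    have : HasDerivAt (fun t => ‖q t‖) ((conj ν * q').re) x := by
      rw [← hval]
      rw [← hfun]
      exact hsq
    exact this.hasDerivWithinAt




/-- Core two-point estimate from the origin. -/
lemma twoPoint {A₁ A₂ : ℂ → ℂ} {K : ℝ} (hK : 0 < K)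
    (hd1 : DifferentiableOn ℂ A₁ (ball 0 1)) (hd2 : DifferentiableOn ℂ A₂ (ball 0 1))
    (hb : ∀ w ∈ ball (0:ℂ) 1,
      (1 - ‖w‖ ^ 2) * (‖A₁ w‖ + ‖A₂ w‖) ≤ K)
    {α : ℂ} (hα : α ∈ ball (0:ℂ) 1) :
    (1 - ‖α‖ ^ 2) * (‖A₁ α‖ + ‖A₂ α‖)
      - (‖A₁ 0‖ + ‖A₂ 0‖)
      ≤ 3*Real.sqrt 3/2*K * ‖α‖ := by
  by_cases hα0 : α = 0
  · simp [hα0]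
  set ρ : ℝ := ‖α‖ with hρ
  have hρpos : 0 < ρ := by
    rw [hρ]; exact norm_pos_iff.2 hα0
  have hρ1 : ρ < 1 := mem_ball_iff_abs.1 hα
  set e : ℂ := α / (ρ:ℂ) with he
  have habse : ‖e‖ = 1 := by
    rw [he, norm_div, Complex.norm_real, Real.norm_eq_abs, hρ, _root_.abs_of_nonneg (norm_nonneg α)]
    exact div_self (ne_of_gt hρpos)
  have hρe : (ρ:ℂ) * e = α := by
    rw [he, mul_div_cancel₀]
    exact_mod_cast ne_of_gt hρpos
  have hece : e * conj e = 1 := by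
    rw [Complex.mul_conj, Complex.normSq_eq_norm_sq, habse]; norm_num
  set cK : ℝ := 3*Real.sqrt 3/2*K with hcK
  have hcKpos : 0 < cK := by
    have : (0:ℝ) < Real.sqrt 3 := Real.sqrt_pos.2 (by norm_num)
    rw [hcK]; positivity
  -- the path functions
  set q1 : ℝ → ℂ := fun t => (1 - ((t:ℂ))^2) * A₁ ((t:ℂ) * e) with hq1
  set q2 : ℝ → ℂ := fun t => (1 - ((t:ℂ))^2) * A₂ ((t:ℂ) * e) with hq2
  set m : ℝ → ℝ := fun t => ‖q1 t‖ + ‖q2 t‖ with hm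
  -- endpoint values
  have hm0 : m 0 = ‖A₁ 0‖ + ‖A₂ 0‖ := by
    simp [hm, hq1, hq2]
  have hmρ : m ρ = (1 - ‖α‖ ^ 2) * (‖A₁ α‖ + ‖A₂ α‖) := by
    have h1 : ((1:ℂ) - ((ρ:ℂ))^2) = ((1 - ρ^2 : ℝ):ℂ) := by push_cast; ring
    have h2 : (0:ℝ) ≤ 1 - ρ^2 := by nlinarith
    simp only [hm, hq1, hq2]
    rw [hρe, h1, norm_mul, norm_mul, Complex.norm_real, Real.norm_eq_abs, _root_.abs_of_nonneg h2, hρ]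
    ring
  suffices hgoal : m ρ - m 0 ≤ cK * ρ by
    rw [hmρ, hm0] at hgoal
    linarith
  -- basic positivity
  have hm0nonneg : 0 ≤ m 0 := add_nonneg (norm_nonneg _) (norm_nonneg _)
  set x₀ : ℝ := m 0 / cK with hx₀def
  have hx₀ : 0 ≤ x₀ := div_nonneg hm0nonneg (le_of_lt hcKpos)
  have hm0cK : cK * x₀ = m 0 := by
    rw [hx₀def, mul_div_cancel₀]
    exact ne_of_gt hcKpos
  -- continuity of m
  have hline : Continuous (fun t : ℝ => (t:ℂ) * e) :=
    Complex.continuous_ofReal.mul continuous_const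
  have hmapball : MapsTo (fun t : ℝ => (t:ℂ) * e) (Icc (0:ℝ) ρ) (ball (0:ℂ) 1) := by
    intro t ht
    rw [mem_ball_iff_abs, norm_mul, habse, mul_one, Complex.norm_real, Real.norm_eq_abs,
      _root_.abs_of_nonneg ht.1]
    linarith [ht.2]
  have hpolyc : Continuous (fun t : ℝ => (1:ℂ) - (t:ℂ)^2) :=
    continuous_const.sub (Complex.continuous_ofReal.pow 2)
  have hq1c : ContinuousOn q1 (Icc (0:ℝ) ρ) :=
    hpolyc.continuousOn.mul (hd1.continuousOn.comp hline.continuousOn hmapball)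
  have hq2c : ContinuousOn q2 (Icc (0:ℝ) ρ) :=
    hpolyc.continuousOn.mul (hd2.continuousOn.comp hline.continuousOn hmapball)
  have hmc : ContinuousOn m (Icc (0:ℝ) ρ) :=
    (continuous_norm.comp_continuousOn hq1c).add
      (continuous_norm.comp_continuousOn hq2c)
  -- the Dini estimate
  set f' : ℝ → ℝ := fun t => (cK - (m t)^2/cK)/(1 - t^2) with hf'def
  have hf' : ∀ x ∈ Ico (0:ℝ) ρ, ∀ r, f' x < r → ∃ᶠ z in 𝓝[>] x, slope m x z < r := by
    intro x hx r hr
    obtain ⟨hx0, hxρ⟩ := hx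
    have hx1 : x < 1 := lt_trans hxρ hρ1
    have hxsq : 0 < 1 - x^2 := by nlinarith
    set z : ℂ := (x:ℂ) * e with hz
    have habsz : ‖z‖ = x := by
      rw [hz, norm_mul, habse, mul_one, Complex.norm_real, Real.norm_eq_abs, _root_.abs_of_nonneg hx0]
    have hzball : z ∈ ball (0:ℂ) 1 := by rw [mem_ball_iff_abs, habsz]; exact hx1
    have hnsz : Complex.normSq z = x^2 := by rw [← Complex.sq_norm, habsz]
    have hconjz : conj z = (x:ℂ) * conj e := by
      rw [hz, map_mul, Complex.conj_ofReal]
    -- derivatives of the path functions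
    have h0' : HasDerivAt (fun t : ℝ => ((t:ℂ))) 1 x := by
      simpa using (hasDerivAt_id x).ofReal_comp
    have hlder : HasDerivAt (fun t : ℝ => (t:ℂ) * e) e x := by
      simpa using h0'.mul_const e
    have hpoly : HasDerivAt (fun t : ℝ => (1:ℂ) - (t:ℂ)^2) (-(2*(x:ℂ))) x := by
      have h1 : HasDerivAt (fun t : ℝ => ((t:ℂ))^2) (2*(x:ℂ)) x := by
        have h2 := (hasDerivAt_pow 2 x).ofReal_comp
        have h3 : (fun t : ℝ => ((t^2 : ℝ) : ℂ)) = (fun t : ℝ => ((t:ℂ))^2) := by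
          funext t; push_cast; ring
        rw [h3] at h2
        convert h2 using 1
        push_cast; ring
      simpa using h1.const_sub 1
    have hA1z : HasDerivAt A₁ (deriv A₁ z) z :=
      (hd1.differentiableAt (isOpen_ball.mem_nhds hzball)).hasDerivAt
    have hA2z : HasDerivAt A₂ (deriv A₂ z) z :=
      (hd2.differentiableAt (isOpen_ball.mem_nhds hzball)).hasDerivAt
    have hA1c : HasDerivAt (fun t : ℝ => A₁ ((t:ℂ)*e)) (e * deriv A₁ z) x := by
      have := HasDerivAt.scomp (x := x) (g₁ := A₁) hA1z hlder
      simpa [Function.comp_def, smul_eq_mul] using this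
    have hA2c : HasDerivAt (fun t : ℝ => A₂ ((t:ℂ)*e)) (e * deriv A₂ z) x := by
      have := HasDerivAt.scomp (x := x) (g₁ := A₂) hA2z hlder
      simpa [Function.comp_def, smul_eq_mul] using this
    set qd1 : ℂ := -(2*(x:ℂ)) * A₁ z + (1 - (x:ℂ)^2) * (e * deriv A₁ z) with hqd1
    set qd2 : ℂ := -(2*(x:ℂ)) * A₂ z + (1 - (x:ℂ)^2) * (e * deriv A₂ z) with hqd2
    have hq1d : HasDerivAt q1 qd1 x := by
      have := hpoly.mul hA1c
      exact this
    have hq2d : HasDerivAt q2 qd2 x := by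
      have := hpoly.mul hA2c
      exact this
    obtain ⟨ν₁, hν₁1, hν₁2, hD1⟩ := absDini hq1d
    obtain ⟨ν₂, hν₂1, hν₂2, hD2⟩ := absDini hq2d
    have hm' : HasDerivWithinAt m ((conj ν₁ * qd1).re + (conj ν₂ * qd2).re) (Ioi x) x :=
      hD1.add hD2
    -- bound the derivative value
    set W : ℂ := conj ν₁ * qd1 + conj ν₂ * qd2 with hW
    have hsre : (conj ν₁ * qd1).re + (conj ν₂ * qd2).re = W.re := by
      rw [hW, Complex.add_re]
    set C : ℂ → ℂ := fun w => conj ν₁ * A₁ w + conj ν₂ * A₂ w with hC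
    have hCdiff : DifferentiableOn ℂ C (ball 0 1) :=
      (hd1.const_mul _).add (hd2.const_mul _)
    have hbC : ∀ w ∈ ball (0:ℂ) 1, (1 - ‖w‖ ^ 2) * ‖C w‖ ≤ K := by
      intro w hw
      have hw1 : ‖w‖ < 1 := mem_ball_iff_abs.1 hw
      have hwpos : 0 ≤ 1 - ‖w‖ ^ 2 := by nlinarith [norm_nonneg w]
      have hCw : ‖C w‖ ≤ ‖A₁ w‖ + ‖A₂ w‖ := by
        rw [hC]
        calc ‖conj ν₁ * A₁ w + conj ν₂ * A₂ w‖
            ≤ ‖conj ν₁ * A₁ w‖ + ‖conj ν₂ * A₂ w‖ :=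
              norm_add_le _ _
          _ = ‖A₁ w‖ + ‖A₂ w‖ := by
              rw [norm_mul, norm_mul, Complex.norm_conj, Complex.norm_conj, hν₁1, hν₂1,
                one_mul, one_mul]
      calc (1 - ‖w‖ ^ 2) * ‖C w‖
          ≤ (1 - ‖w‖ ^ 2) * (‖A₁ w‖ + ‖A₂ w‖) :=
            mul_le_mul_of_nonneg_left hCw hwpos
        _ ≤ K := hb w hw
    have hIB := invariantBound hK hCdiff hbC hzball
    rw [hnsz] at hIB
    -- identify (1-x²) * C z with m x
    have hν₁n : conj ν₁ * ν₁ = 1 := by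
      rw [mul_comm, Complex.mul_conj, Complex.normSq_eq_norm_sq, hν₁1]; norm_num
    have hν₂n : conj ν₂ * ν₂ = 1 := by
      rw [mul_comm, Complex.mul_conj, Complex.normSq_eq_norm_sq, hν₂1]; norm_num
    have he1 : conj ν₁ * q1 x = ((‖q1 x‖ : ℝ):ℂ) := by
      calc conj ν₁ * q1 x = conj ν₁ * (ν₁ * ((‖q1 x‖ : ℝ):ℂ)) := by rw [hν₁2]
        _ = (conj ν₁ * ν₁) * ((‖q1 x‖ : ℝ):ℂ) := by ring
        _ = _ := by rw [hν₁n, one_mul]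
    have he2 : conj ν₂ * q2 x = ((‖q2 x‖ : ℝ):ℂ) := by
      calc conj ν₂ * q2 x = conj ν₂ * (ν₂ * ((‖q2 x‖ : ℝ):ℂ)) := by rw [hν₂2]
        _ = (conj ν₂ * ν₂) * ((‖q2 x‖ : ℝ):ℂ) := by ring
        _ = _ := by rw [hν₂n, one_mul]
    have hc1 : ((1-x^2:ℝ):ℂ) * A₁ z = q1 x := by
      simp only [hq1]
      rw [← hz]
      push_cast
      ring
    have hc2 : ((1-x^2:ℝ):ℂ) * A₂ z = q2 x := by
      simp only [hq2]
      rw [← hz]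
      push_cast
      ring
    have hCzval : ((1 - x^2 : ℝ):ℂ) * C z = ((m x : ℝ):ℂ) := by
      simp only [hm]
      push_cast
      rw [← he1, ← he2, ← hc1, ← hc2]
      simp only [hC]
      push_cast
      ring
    have habsCz : (1 - x^2) * ‖C z‖ = m x := by
      have := congrArg norm hCzval
      rw [norm_mul, Complex.norm_real, Real.norm_eq_abs, _root_.abs_of_nonneg (le_of_lt hxsq),
        Complex.norm_real, Real.norm_eq_abs] at this
      rw [this]
      exact _root_.abs_of_nonneg (add_nonneg (norm_nonneg _) (norm_nonneg _))
    rw [habsCz] at hIB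
    -- the invariant identity
    have hderivC : deriv C z = conj ν₁ * deriv A₁ z + conj ν₂ * deriv A₂ z := by
      have d1 : DifferentiableAt ℂ A₁ z := hd1.differentiableAt (isOpen_ball.mem_nhds hzball)
      have d2 : DifferentiableAt ℂ A₂ z := hd2.differentiableAt (isOpen_ball.mem_nhds hzball)
      rw [hC]
      rw [deriv_fun_add (d1.const_mul _) (d2.const_mul _), deriv_const_mul _ d1,
        deriv_const_mul _ d2]
    have hWeq : ((1-x^2:ℝ):ℂ) * W
        = e * (((1 - x^2 : ℝ):ℂ)^2 * deriv C z - 2 * conj z * ((1 - x^2:ℝ):ℂ) * C z) := by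
      rw [hderivC, hW, hqd1, hqd2, hconjz, hC]
      push_cast
      linear_combination (2 * (x:ℂ) * (1 - (x:ℂ)^2) * (conj ν₁ * A₁ z + conj ν₂ * A₂ z)) * hece
    have habsW : (1 - x^2) * ‖W‖
        = ‖((1 - x^2 : ℝ):ℂ)^2 * deriv C z - 2 * conj z * ((1 - x^2:ℝ):ℂ) * C z‖ := by
      calc (1 - x^2) * ‖W‖ = ‖((1-x^2:ℝ):ℂ) * W‖ := by
            rw [norm_mul, Complex.norm_real, Real.norm_eq_abs, _root_.abs_of_nonneg (le_of_lt hxsq)]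
        _ = _ := by rw [hWeq, norm_mul, habse, one_mul]
    have hWle : W.re ≤ f' x := by
      have h1 : W.re ≤ ‖W‖ := Complex.re_le_norm W
      have h2 : (1-x^2) * ‖W‖ ≤ cK - (m x)^2/cK := by
        rw [habsW, hcK]; exact hIB
      have h4 : W.re * (1-x^2) ≤ cK - (m x)^2/cK := by nlinarith
      show W.re ≤ (cK - (m x)^2/cK)/(1-x^2)
      exact (le_div_iff₀ hxsq).2 h4
    -- conclude the frequently statement
    have htends : Tendsto (slope m x) (𝓝[>] x) (𝓝 ((conj ν₁ * qd1).re + (conj ν₂ * qd2).re)) :=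
      (hasDerivWithinAt_iff_tendsto_slope' (by simp : x ∉ Ioi x)).1 hm'
    have hlt : (conj ν₁ * qd1).re + (conj ν₂ * qd2).re < r := by
      rw [hsre]; exact lt_of_le_of_lt hWle hr
    exact ((htends.eventually_lt_const hlt).frequently)
  -- comparison with the supersolution
  have hcomp : ∀ ε, 0 < ε → m ρ ≤ cK*((x₀+ρ)/(1+x₀*ρ)) + ε*(1+ρ) := by
    intro ε hε
    set B : ℝ → ℝ := fun t => cK*((x₀+t)/(1+x₀*t)) + ε*(1+t) with hB
    set B' : ℝ → ℝ := fun t => cK*((1-x₀^2)/(1+x₀*t)^2) + ε with hB'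
    have hBd : ∀ x ∈ Ico (0:ℝ) ρ, HasDerivWithinAt B (B' x) (Ici x) x := by
      intro x hx
      have hx0 : (0:ℝ) ≤ x := hx.1
      have hdne : 1 + x₀*x ≠ 0 := by positivity
      have h1 : HasDerivAt (fun t => (x₀+t)/(1+x₀*t))
          ((1*(1+x₀*x) - (x₀+x)*(x₀*1))/(1+x₀*x)^2) x :=
        ((hasDerivAt_id x).const_add x₀).div (((hasDerivAt_id x).const_mul x₀).const_add 1) hdne
      have h2 : HasDerivAt B
          (cK*((1*(1+x₀*x) - (x₀+x)*(x₀*1))/(1+x₀*x)^2) + ε*1) x :=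
        (h1.const_mul cK).add (((hasDerivAt_id x).const_add 1).const_mul ε)
      have heq : cK*((1*(1+x₀*x) - (x₀+x)*(x₀*1))/(1+x₀*x)^2) + ε*1 = B' x := by
        rw [hB']
        have : (1*(1+x₀*x) - (x₀+x)*(x₀*1)) = 1 - x₀^2 := by ring
        rw [this]
        norm_num
      rw [heq] at h2
      exact h2.hasDerivWithinAt
    have hBc : ContinuousOn B (Icc (0:ℝ) ρ) := by
      apply ContinuousOn.add
      · apply ContinuousOn.mul continuousOn_const
        apply ContinuousOn.div
        · exact (continuous_const.add continuous_id).continuousOn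
        · exact (continuous_const.add (continuous_const.mul continuous_id)).continuousOn
        · intro t ht
          have : (0:ℝ) ≤ t := ht.1
          positivity
      · exact (continuous_const.mul (continuous_const.add continuous_id)).continuousOn
    have ha : m 0 ≤ B 0 := by
      have hB0 : B 0 = cK*x₀ + ε := by rw [hB]; norm_num
      rw [hB0, hm0cK]
      linarith
    have hbound : ∀ x ∈ Ico (0:ℝ) ρ, m x = B x → f' x < B' x := by
      intro x hx hcontact
      obtain ⟨hx0, hxρ⟩ := hx
      have hx1 : x < 1 := lt_trans hxρ hρ1
      have hxsq : 0 < 1 - x^2 := by nlinarith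
      have hdpos : 0 < 1 + x₀*x := by positivity
      set X : ℝ := (x₀+x)/(1+x₀*x) with hX
      have hX0 : 0 ≤ X := by positivity
      have hmix : m x = cK*X + ε*(1+x) := by rw [hcontact, hB]
      have hmge : cK*X ≤ m x := by
        rw [hmix]; nlinarith
      have hsq2 : (cK*X)^2 ≤ (m x)^2 := by
        have h0 : 0 ≤ cK*X := by positivity
        nlinarith
      have hid : (cK - (cK*X)^2/cK)/(1-x^2) = cK*((1-x₀^2)/(1+x₀*x)^2) := by
        rw [hX]
        field_simp
        ring
      have hnum : cK - (m x)^2/cK ≤ cK - (cK*X)^2/cK := by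
        have hfrac : (cK*X)^2/cK ≤ (m x)^2/cK := div_le_div_of_nonneg_right hsq2 (le_of_lt hcKpos)
        linarith
      have hkey : (cK - (m x)^2/cK)/(1-x^2) ≤ cK*((1-x₀^2)/(1+x₀*x)^2) := by
        rw [← hid]
        exact div_le_div_of_nonneg_right hnum (le_of_lt hxsq)
      show f' x < B' x
      rw [hB']
      calc f' x = (cK - (m x)^2/cK)/(1-x^2) := rfl
        _ ≤ cK*((1-x₀^2)/(1+x₀*x)^2) := hkey
        _ < cK*((1-x₀^2)/(1+x₀*x)^2) + ε := by linarith
    have himg := image_le_of_liminf_slope_right_lt_deriv_boundary' hmc hf' ha hBc hBd hbound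
    have := himg (right_mem_Icc.2 (le_of_lt hρpos))
    rw [hB] at this
    exact this
  -- pass to the limit ε → 0
  have hfinal : m ρ ≤ cK*((x₀+ρ)/(1+x₀*ρ)) := by
    apply le_of_forall_pos_le_add
    intro ε hε
    have h1 := hcomp (ε/2) (by linarith)
    have h2 : (ε/2)*(1+ρ) ≤ ε := by nlinarith
    linarith
  have hmono : (x₀+ρ)/(1+x₀*ρ) ≤ x₀+ρ := by
    apply div_le_self (by positivity)
    nlinarith
  have hlast : m ρ ≤ cK*(x₀+ρ) := by
    calc m ρ ≤ cK*((x₀+ρ)/(1+x₀*ρ)) := hfinal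
      _ ≤ cK*(x₀+ρ) := by
        apply mul_le_mul_of_nonneg_left hmono (le_of_lt hcKpos)
  calc m ρ - m 0 ≤ cK*(x₀+ρ) - m 0 := by linarith
    _ = cK * ρ := by rw [← hm0cK]; ring







/-- weighted-absolute-value transfer along `moeb`. -/
lemma transfer_abs {a w : ℂ} (ha : ‖a‖ < 1) (hw : ‖w‖ < 1) (A : ℂ → ℂ) :
    (1 - ‖w‖ ^ 2) *
        ‖A (moeb a w) * (((1 - Complex.normSq a : ℝ):ℂ) / (1 + conj a * w)^2)‖
      = (1 - ‖moeb a w‖ ^ 2) * ‖A (moeb a w)‖ := by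
  have hd := moeb_den_ne ha hw
  have hnsd : Complex.normSq (1 + conj a * w) ≠ 0 := by
    simpa [Complex.normSq_eq_zero] using hd
  have hnsdpos : 0 < Complex.normSq (1 + conj a * w) :=
    (Complex.normSq_nonneg _).lt_of_ne (Ne.symm hnsd)
  have hna : 0 < 1 - Complex.normSq a := by linarith [normSq_lt_one ha]
  have h1 : ‖(((1 - Complex.normSq a : ℝ):ℂ) / (1 + conj a * w)^2)‖
      = (1 - Complex.normSq a) / Complex.normSq (1 + conj a * w) := by
    rw [norm_div, Complex.norm_real, Real.norm_eq_abs, _root_.abs_of_nonneg (le_of_lt hna), norm_pow,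
      Complex.sq_norm]
  rw [norm_mul, h1]
  rw [Complex.sq_norm, Complex.sq_norm, one_sub_normSq_moeb ha hw]
  field_simp


end Stmt8

open Stmt8 in
theorem statement8 (h g : ℂ → ℂ)
    (hh : DifferentiableOn ℂ h (Metric.ball 0 1))
    (hg : DifferentiableOn ℂ g (Metric.ball 0 1)) (K : ℝ)
    (hK : ∀ z ∈ Metric.ball (0 : ℂ) 1,
      (1 - ‖z‖ ^ 2) * (‖deriv h z‖ + ‖deriv g z‖) ≤ K) :
    ∀ z₁ ∈ Metric.ball (0 : ℂ) 1, ∀ z₂ ∈ Metric.ball (0 : ℂ) 1,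
      |(1 - ‖z₁‖ ^ 2) * (‖deriv h z₁‖ + ‖deriv g z₁‖) -
        (1 - ‖z₂‖ ^ 2) * (‖deriv h z₂‖ + ‖deriv g z₂‖)| ≤
        (3 * Real.sqrt 3 / 2) * K *
          ‖(z₁ - z₂) / (1 - (starRingEnd ℂ) z₂ * z₁)‖ := by
  have s3pos : 0 < Real.sqrt 3 := Real.sqrt_pos.2 (by norm_num)
  -- the local Bloch quantity
  set B : ℂ → ℝ := fun z =>
    (1 - ‖z‖ ^ 2) * (‖deriv h z‖ + ‖deriv g z‖) with hB
  have hBnonneg : ∀ z ∈ ball (0:ℂ) 1, 0 ≤ B z := by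
    intro z hz
    have hz1 : ‖z‖ < 1 := mem_ball_iff_abs.1 hz
    have : 0 ≤ 1 - ‖z‖ ^ 2 := by nlinarith [norm_nonneg z]
    have h2 : 0 ≤ ‖deriv h z‖ + ‖deriv g z‖ :=
      add_nonneg (norm_nonneg _) (norm_nonneg _)
    exact mul_nonneg this h2
  have hK0 : 0 ≤ K := le_trans (hBnonneg 0 (by simp)) (hK 0 (by simp))
  -- differentiability of the derivatives
  have hd1 : DifferentiableOn ℂ (deriv h) (ball (0:ℂ) 1) :=
    ((hh.analyticOnNhd isOpen_ball).deriv).differentiableOn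
  have hd2 : DifferentiableOn ℂ (deriv g) (ball (0:ℂ) 1) :=
    ((hg.analyticOnNhd isOpen_ball).deriv).differentiableOn
  intro z₁ hz₁ z₂ hz₂
  have hz₁' : ‖z₁‖ < 1 := mem_ball_iff_abs.1 hz₁
  have hz₂' : ‖z₂‖ < 1 := mem_ball_iff_abs.1 hz₂
  -- handle K = 0
  rcases eq_or_lt_of_le hK0 with hK0' | hKpos
  · have hB1 : B z₁ = 0 := le_antisymm (by rw [hK0']; exact hK z₁ hz₁) (hBnonneg z₁ hz₁)
    have hB2 : B z₂ = 0 := le_antisymm (by rw [hK0']; exact hK z₂ hz₂) (hBnonneg z₂ hz₂)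
    rw [show (1 - ‖z₁‖ ^ 2) * (‖deriv h z₁‖ + ‖deriv g z₁‖) = B z₁ from rfl,
      show (1 - ‖z₂‖ ^ 2) * (‖deriv h z₂‖ + ‖deriv g z₂‖) = B z₂ from rfl,
      hB1, hB2, ← hK0']
    simp
  -- main case: one-sided estimate
  have oneSided : ∀ w₁ ∈ ball (0:ℂ) 1, ∀ w₂ ∈ ball (0:ℂ) 1,
      B w₁ - B w₂ ≤ 3*Real.sqrt 3/2*K * ‖(w₁ - w₂) / (1 - conj w₂ * w₁)‖ := by
    intro w₁ hw₁ w₂ hw₂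
    have hw₁' : ‖w₁‖ < 1 := mem_ball_iff_abs.1 hw₁
    have hw₂' : ‖w₂‖ < 1 := mem_ball_iff_abs.1 hw₂
    -- the denominator
    have hdne : (1:ℂ) - conj w₂ * w₁ ≠ 0 := by
      intro hc
      have h1 : ‖conj w₂ * w₁‖ < 1 := by
        rw [norm_mul, Complex.norm_conj]
        nlinarith [norm_nonneg w₂, norm_nonneg w₁]
      have h2 : conj w₂ * w₁ = 1 := by linear_combination -hc
      rw [h2] at h1; simp at h1
    set α : ℂ := (w₁ - w₂) / (1 - conj w₂ * w₁) with hα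
    -- α in ball
    have hnsid : Complex.normSq (1 - conj w₂ * w₁) - Complex.normSq (w₁ - w₂)
        = (1 - Complex.normSq w₂) * (1 - Complex.normSq w₁) := by
      simp only [Complex.normSq_apply, Complex.sub_re, Complex.sub_im, Complex.mul_re,
        Complex.mul_im, Complex.conj_re, Complex.conj_im, Complex.one_re, Complex.one_im]
      ring
    have hnsdpos : 0 < Complex.normSq (1 - conj w₂ * w₁) := by
      have := Complex.normSq_pos.2 hdne
      exact this
    have hαball : α ∈ ball (0:ℂ) 1 := by
      rw [mem_ball_iff_abs]
      apply abs_lt_one_of_normSq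
      rw [hα, Complex.normSq_div]
      rw [div_lt_one hnsdpos]
      nlinarith [normSq_lt_one hw₁', normSq_lt_one hw₂']
    -- moeb w₂ α = w₁
    have hmoeb : moeb w₂ α = w₁ := by
      have hden2 : 1 + conj w₂ * α ≠ 0 :=
        moeb_den_ne hw₂' (mem_ball_iff_abs.1 hαball)
      rw [moeb, div_eq_iff hden2, hα]
      have hdne' : (1:ℂ) - w₁ * conj w₂ ≠ 0 := by rwa [mul_comm]
      field_simp
      ring
    -- transfer functions
    set ψ : ℂ → ℂ := fun w => ((1 - Complex.normSq w₂ : ℝ):ℂ) / (1 + conj w₂ * w)^2 with hψ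
    set A1 : ℂ → ℂ := fun w => deriv h (moeb w₂ w) * ψ w with hA1
    set A2 : ℂ → ℂ := fun w => deriv g (moeb w₂ w) * ψ w with hA2
    have hmoDiff : DifferentiableOn ℂ (moeb w₂) (ball 0 1) := by
      apply DifferentiableOn.div
      · exact (differentiableOn_const _).add differentiableOn_id
      · exact (differentiableOn_const _).add (differentiableOn_id.const_mul _)
      · intro w hw; exact moeb_den_ne hw₂' (mem_ball_iff_abs.1 hw)
    have hψdiff : DifferentiableOn ℂ ψ (ball 0 1) := by
      apply DifferentiableOn.div (differentiableOn_const _)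
      · exact ((differentiableOn_const _).add (differentiableOn_id.const_mul _)).pow 2
      · intro w hw; exact pow_ne_zero 2 (moeb_den_ne hw₂' (mem_ball_iff_abs.1 hw))
    have hA1diff : DifferentiableOn ℂ A1 (ball 0 1) :=
      (hd1.comp hmoDiff fun w hw => moeb_mem_ball hw₂' (mem_ball_iff_abs.1 hw)).mul hψdiff
    have hA2diff : DifferentiableOn ℂ A2 (ball 0 1) :=
      (hd2.comp hmoDiff fun w hw => moeb_mem_ball hw₂' (mem_ball_iff_abs.1 hw)).mul hψdiff
    have hbound : ∀ w ∈ ball (0:ℂ) 1,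
        (1 - ‖w‖ ^ 2) * (‖A1 w‖ + ‖A2 w‖) ≤ K := by
      intro w hw
      have hw' : ‖w‖ < 1 := mem_ball_iff_abs.1 hw
      have t1 := transfer_abs hw₂' hw' (deriv h)
      have t2 := transfer_abs hw₂' hw' (deriv g)
      have : (1 - ‖w‖ ^ 2) * (‖A1 w‖ + ‖A2 w‖)
          = (1 - ‖moeb w₂ w‖ ^ 2) *
              (‖deriv h (moeb w₂ w)‖ + ‖deriv g (moeb w₂ w)‖) := by
        simp only [hA1, hA2, hψ]
        rw [mul_add, mul_add, t1, t2]
      rw [this]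
      exact hK _ (moeb_mem_ball hw₂' hw')
    -- endpoint identities
    have hval1 : (1 - ‖α‖ ^ 2) * (‖A1 α‖ + ‖A2 α‖) = B w₁ := by
      have t1 := transfer_abs hw₂' (mem_ball_iff_abs.1 hαball) (deriv h)
      have t2 := transfer_abs hw₂' (mem_ball_iff_abs.1 hαball) (deriv g)
      simp only [hA1, hA2, hψ]
      rw [mul_add, t1, t2, hmoeb]
      simp only [hB]
      ring
    have hval2 : ‖A1 0‖ + ‖A2 0‖ = B w₂ := by
      have hmo0 : moeb w₂ 0 = w₂ := by simp [moeb]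
      have t1 := transfer_abs hw₂' (by norm_num : ‖(0:ℂ)‖ < 1) (deriv h)
      have t2 := transfer_abs hw₂' (by norm_num : ‖(0:ℂ)‖ < 1) (deriv g)
      rw [hmo0] at t1 t2
      simp only [norm_zero] at t1 t2
      norm_num at t1 t2
      simp only [hA1, hA2, hψ, hB, hmo0]
      norm_num
      linarith [t1, t2]
    have := twoPoint hKpos hA1diff hA2diff hbound hαball
    rw [hval1, hval2] at this
    linarith
  -- combine both directions
  have h12 := oneSided z₁ hz₁ z₂ hz₂
  have h21 := oneSided z₂ hz₂ z₁ hz₁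
  have hsym : ‖(z₂ - z₁) / (1 - conj z₁ * z₂)‖
      = ‖(z₁ - z₂) / (1 - conj z₂ * z₁)‖ := by
    have hd : ‖1 - conj z₁ * z₂‖ = ‖1 - conj z₂ * z₁‖ := by
      rw [← Complex.norm_conj (1 - conj z₂ * z₁)]
      congr 1
      rw [map_sub, map_one, map_mul, Complex.conj_conj]
      ring
    rw [norm_div, norm_div, hd, norm_sub_rev z₂ z₁]
  rw [hsym] at h21
  rw [abs_sub_le_iff]
  constructor
  · calc (1 - ‖z₁‖ ^ 2) * (‖deriv h z₁‖ + ‖deriv g z₁‖) -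
        (1 - ‖z₂‖ ^ 2) * (‖deriv h z₂‖ + ‖deriv g z₂‖)
        = B z₁ - B z₂ := rfl
      _ ≤ _ := by
          have := h12
          calc B z₁ - B z₂ ≤ 3*Real.sqrt 3/2*K * ‖(z₁ - z₂) / (1 - conj z₂ * z₁)‖ := h12
            _ = (3 * Real.sqrt 3 / 2) * K * ‖(z₁ - z₂) / (1 - conj z₂ * z₁)‖ := by ring
  · calc (1 - ‖z₂‖ ^ 2) * (‖deriv h z₂‖ + ‖deriv g z₂‖) -
        (1 - ‖z₁‖ ^ 2) * (‖deriv h z₁‖ + ‖deriv g z₁‖)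
        = B z₂ - B z₁ := rfl
      _ ≤ _ := by
          calc B z₂ - B z₁ ≤ 3*Real.sqrt 3/2*K * ‖(z₁ - z₂) / (1 - conj z₂ * z₁)‖ := h21
            _ = (3 * Real.sqrt 3 / 2) * K * ‖(z₁ - z₂) / (1 - conj z₂ * z₁)‖ := by ring
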